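/- (Thiele's differential equation, matrix form.) The matrix of partial reserves V(t) with entries v_{ij}(t) = E[1{Z(T)=j} ∫_t^T e^{−∫_t^u r(x)dx} dB(u) | Z(t)=i] satisfies ∂V(t)/∂t = r(t)V(t) − M(t)V(t) − R(t)P(t,T) with terminal condition V(T)=0, where R(t) is the matrix of expected instantaneous payment rates and P the transition matrix. -/

import Mathlib

open Matrix MeasureTheory

attribute [local instance] Matrix.linftyOpNormedAddCommGroup Matrix.linftyOpNormedSpace
  Matrix.linftyOpNormedRing Matrix.linftyOpNormedAlgebra

/-- Uniqueness for the linear matrix ODE `X' = X * A t`. -/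
private lemma ode_mul_unique {p : ℕ} {A : ℝ → Matrix (Fin p) (Fin p) ℝ} (hA : Continuous A)
    {f g : ℝ → Matrix (Fin p) (Fin p) ℝ}
    (hf : ∀ t, HasDerivAt f (f t * A t) t)
    (hg : ∀ t, HasDerivAt g (g t * A t) t)
    {t₀ : ℝ} (h0 : f t₀ = g t₀) (t : ℝ) : f t = g t := by
  set a : ℝ := min t₀ t - 1 with ha
  set b : ℝ := max t₀ t + 1 with hb
  have ht₀ : t₀ ∈ Set.Ioo a b := by
    constructor
    · have := min_le_left t₀ t; simp only [ha]; linarith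
    · have := le_max_left t₀ t; simp only [hb]; linarith
  have htmem : t ∈ Set.Icc a b := by
    constructor
    · have := min_le_right t₀ t; simp only [ha]; linarith
    · have := le_max_right t₀ t; simp only [hb]; linarith
  obtain ⟨C, hC⟩ := (isCompact_Icc (a := a) (b := b)).exists_bound_of_continuousOn
    hA.continuousOn
  set π : ℝ → ℝ := fun u => max a (min u b) with hπdef
  have hab : a ≤ b := le_trans (le_of_lt ht₀.1) (le_of_lt ht₀.2)
  have hπmem : ∀ u, π u ∈ Set.Icc a b := by
    intro u
    refine ⟨le_max_left _ _, max_le hab (min_le_right _ _)⟩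
  have hπeq : ∀ u ∈ Set.Icc a b, π u = u := by
    intro u hu
    simp only [hπdef]
    rw [min_eq_left hu.2, max_eq_right hu.1]
  set v : ℝ → Matrix (Fin p) (Fin p) ℝ → Matrix (Fin p) (Fin p) ℝ :=
    fun u X => X * A (π u) with hv
  have hK : ∀ u, LipschitzWith C.toNNReal (v u) := by
    intro u
    apply LipschitzWith.of_dist_le_mul
    intro X Y
    simp only [hv, dist_eq_norm]
    rw [← sub_mul]
    calc ‖(X - Y) * A (π u)‖ ≤ ‖X - Y‖ * ‖A (π u)‖ := norm_mul_le _ _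
      _ ≤ ‖X - Y‖ * C := by
          exact mul_le_mul_of_nonneg_left (hC _ (hπmem u)) (norm_nonneg _)
      _ ≤ ‖X - Y‖ * C.toNNReal := by
          apply mul_le_mul_of_nonneg_left _ (norm_nonneg _)
          exact le_max_left _ _
      _ = (C.toNNReal : ℝ) * ‖X - Y‖ := mul_comm _ _
  have := ODE_solution_unique_of_mem_Icc (v := v) (K := C.toNNReal)
    (s := fun _ => Set.univ) (fun u _ => (hK u).lipschitzOnWith (s := Set.univ)) ht₀
    (fun u _ => (hf u).continuousAt.continuousWithinAt)
    (fun u hu => by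
      have := hf u
      rwa [show f u * A u = v u (f u) by simp only [hv]; rw [hπeq u (Set.Ioo_subset_Icc_self hu)]]
        at this)
    (fun u _ => trivial)
    (fun u _ => (hg u).continuousAt.continuousWithinAt)
    (fun u hu => by
      have := hg u
      rwa [show g u * A u = v u (g u) by simp only [hv]; rw [hπeq u (Set.Ioo_subset_Icc_self hu)]]
        at this)
    (fun u _ => trivial) h0
  exact this htmem

/-- Cocycle property for solutions of `∂_u X s u = X s u * A u`, `X s s = 1`. -/
private lemma ode_cocycle {p : ℕ} {A : ℝ → Matrix (Fin p) (Fin p) ℝ} (hA : Continuous A)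
    {X : ℝ → ℝ → Matrix (Fin p) (Fin p) ℝ}
    (hX : ∀ s t : ℝ, HasDerivAt (fun u => X s u) (X s t * A t) t)
    (hX0 : ∀ s : ℝ, X s s = 1) (s t u : ℝ) :
    X s u = X s t * X t u := by
  have hg : ∀ w, HasDerivAt (fun u => X s t * X t u) ((X s t * X t w) * A w) w := by
    intro w
    have := (hX t w).const_mul (X s t)
    rwa [← mul_assoc] at this
  exact ode_mul_unique hA (hX s) hg (t₀ := t) (by rw [hX0 t, mul_one]) u

/-- **Thiele's differential equation, matrix form.** The partial reserve
matrix `V t = ∫_t^T ∏_t^u (I + (M - r•I) ds) * R u * ∏_u^T (I + M ds) du` satisfies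
`∂V/∂t = r t • V t - M t * V t - R t * P (t,T)` with terminal condition `V T = 0`, where
`P` is the transition (product integral of `M`) and `F` the product integral of `M - r•I`. -/
theorem thiele_matrix_ode {p : ℕ} (T : ℝ)
    (M R : ℝ → Matrix (Fin p) (Fin p) ℝ) (r : ℝ → ℝ)
    (hM : Continuous M) (hR : Continuous R) (hr : Continuous r)
    (P F : ℝ → ℝ → Matrix (Fin p) (Fin p) ℝ)
    (hP : ∀ s t : ℝ, HasDerivAt (fun u => P s u) (P s t * M t) t)
    (hP0 : ∀ s : ℝ, P s s = 1)
    (hF : ∀ s t : ℝ, HasDerivAt (fun u => F s u) (F s t * (M t - r t • 1)) t)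
    (hF0 : ∀ s : ℝ, F s s = 1)
    (V : ℝ → Matrix (Fin p) (Fin p) ℝ)
    (hV : ∀ t : ℝ, V t = ∫ u in t..T, F t u * R u * P u T) :
    (∀ t : ℝ, HasDerivAt V (r t • V t - M t * V t - R t * P t T) t) ∧ V T = 0 := by
  classical
  set A : ℝ → Matrix (Fin p) (Fin p) ℝ := fun t => M t - r t • 1 with hA
  have hAcont : Continuous A := hM.sub (hr.smul continuous_const)
  -- cocycles
  have hFco : ∀ s t u : ℝ, F s u = F s t * F t u := ode_cocycle hAcont hF hF0
  have hPco : ∀ s t u : ℝ, P s u = P s t * P t u := ode_cocycle hM hP hP0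
  -- continuity of t ↦ F 0 t and t ↦ P u 0 etc.
  have hFdiff : Differentiable ℝ (fun t => F 0 t) := fun t => (hF 0 t).differentiableAt
  have hPdiff : Differentiable ℝ (fun t => P 0 t) := fun t => (hP 0 t).differentiableAt
  have hFcont : Continuous (fun t => F 0 t) := hFdiff.continuous
  have hPcont : Continuous (fun t => P 0 t) := hPdiff.continuous
  -- units
  have hFinv : ∀ t, F t 0 * F 0 t = 1 := fun t => by rw [← hFco t 0 t, hF0 t]
  have hFinv' : ∀ t, F 0 t * F t 0 = 1 := fun t => by rw [← hFco 0 t 0, hF0 0]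
  have hPinv : ∀ t, P t 0 * P 0 t = 1 := fun t => by rw [← hPco t 0 t, hP0 t]
  have hPinv' : ∀ t, P 0 t * P t 0 = 1 := fun t => by rw [← hPco 0 t 0, hP0 0]
  set UF : ℝ → (Matrix (Fin p) (Fin p) ℝ)ˣ := fun t =>
    ⟨F 0 t, F t 0, hFinv' t, hFinv t⟩ with hUF
  set UP : ℝ → (Matrix (Fin p) (Fin p) ℝ)ˣ := fun t =>
    ⟨P 0 t, P t 0, hPinv' t, hPinv t⟩ with hUP
  have hFinvEq : ∀ t, F t 0 = Ring.inverse (F 0 t) := by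
    intro t
    have : Ring.inverse ((UF t : Matrix (Fin p) (Fin p) ℝ)) = ↑(UF t)⁻¹ :=
      Ring.inverse_unit (UF t)
    simpa [hUF] using this.symm
  have hPinvEq : ∀ t, P t 0 = Ring.inverse (P 0 t) := by
    intro t
    have : Ring.inverse ((UP t : Matrix (Fin p) (Fin p) ℝ)) = ↑(UP t)⁻¹ :=
      Ring.inverse_unit (UP t)
    simpa [hUP] using this.symm
  -- derivative of G t = F t 0
  have hG : ∀ t, HasDerivAt (fun t => F t 0) (-(A t * F t 0)) t := by
    intro t
    have h1 : HasFDerivAt (Ring.inverse : Matrix (Fin p) (Fin p) ℝ → Matrix (Fin p) (Fin p) ℝ)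
        (-(ContinuousLinearMap.mulLeftRight ℝ (Matrix (Fin p) (Fin p) ℝ)
          (((UF t)⁻¹ : (Matrix (Fin p) (Fin p) ℝ)ˣ) : Matrix (Fin p) (Fin p) ℝ)
          (((UF t)⁻¹ : (Matrix (Fin p) (Fin p) ℝ)ˣ) : Matrix (Fin p) (Fin p) ℝ))) (F 0 t) :=
      hasFDerivAt_ringInverse (UF t)
    have h2 := h1.comp_hasDerivAt t (hF 0 t)
    have heqfun : (Ring.inverse ∘ F 0 : ℝ → Matrix (Fin p) (Fin p) ℝ) = fun u => F u 0 :=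
      funext fun u => (hFinvEq u).symm
    rw [heqfun] at h2
    refine h2.congr_deriv ?_
    have hcoe : (((UF t)⁻¹ : (Matrix (Fin p) (Fin p) ℝ)ˣ) : Matrix (Fin p) (Fin p) ℝ) = F t 0 := rfl
    simp only [ContinuousLinearMap.neg_apply, ContinuousLinearMap.mulLeftRight_apply, hcoe]
    rw [← mul_assoc, hFinv t, one_mul, hA]
  -- continuity of t ↦ P t 0 (hence of u ↦ P u T)
  have hPT : ∀ u, P u T = P u 0 * P 0 T := fun u => hPco u 0 T
  have hP0cont : Continuous (fun u => P u 0) := by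
    have : (fun u => P u 0) = (fun X => Ring.inverse X) ∘ (fun u => P 0 u) := by
      funext u; exact hPinvEq u
    rw [this]
    rw [continuous_iff_continuousAt]
    intro u
    have h1 : ContinuousAt (fun u => P 0 u) u := hPcont.continuousAt
    have h2 : ContinuousAt (Ring.inverse : Matrix (Fin p) (Fin p) ℝ → Matrix (Fin p) (Fin p) ℝ)
        ((fun u => P 0 u) u) := NormedRing.inverse_continuousAt (UP u)
    exact h2.comp h1
  -- the integrand
  set h : ℝ → Matrix (Fin p) (Fin p) ℝ := fun u => F 0 u * R u * P u T with hh
  have hhcont : Continuous h := by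
    have : Continuous (fun u => P u T) := by
      have h1 : Continuous (fun u => P u 0 * P 0 T) := hP0cont.mul continuous_const
      simpa [← hPT] using h1
    exact (hFcont.mul hR).mul this
  -- W t = ∫ u in t..T, h u
  set W : ℝ → Matrix (Fin p) (Fin p) ℝ := fun t => ∫ u in t..T, h u with hW
  have hWd : ∀ t, HasDerivAt W (-(h t)) t := by
    intro t
    have h1 : ∀ t', W t' = (∫ u in (0:ℝ)..T, h u) - ∫ u in (0:ℝ)..t', h u := by
      intro t'
      rw [hW]
      rw [eq_sub_iff_add_eq, add_comm,
        intervalIntegral.integral_add_adjacent_intervals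
          (hhcont.intervalIntegrable _ _) (hhcont.intervalIntegrable _ _)]
    have h2 : HasDerivAt (fun t' => ∫ u in (0:ℝ)..t', h u) (h t) t :=
      (hhcont.integral_hasStrictDerivAt 0 t).hasDerivAt
    have h3 : HasDerivAt (fun t' => (∫ u in (0:ℝ)..T, h u) - ∫ u in (0:ℝ)..t', h u)
        (-(h t)) t := h2.const_sub _
    have : W = fun t' => (∫ u in (0:ℝ)..T, h u) - ∫ u in (0:ℝ)..t', h u := funext h1
    rw [this]
    exact h3
  -- V t = F t 0 * W t
  have hVeq : ∀ t, V t = F t 0 * W t := by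
    intro t
    rw [hV t, hW]
    have : ∀ u, F t u * R u * P u T = F t 0 * h u := by
      intro u
      simp only [hh, hFco t 0 u, mul_assoc]
    simp only [this]
    -- pull the constant out via a continuous linear map
    set L : Matrix (Fin p) (Fin p) ℝ →L[ℝ] Matrix (Fin p) (Fin p) ℝ :=
      ContinuousLinearMap.mul ℝ (Matrix (Fin p) (Fin p) ℝ) (F t 0) with hL
    have := L.intervalIntegral_comp_comm (μ := MeasureTheory.volume) (hhcont.intervalIntegrable t T)
    simpa [hL, ContinuousLinearMap.mul_apply'] using this
  constructor
  · intro t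
    have hd : HasDerivAt (fun t => F t 0 * W t)
        ((-(A t * F t 0)) * W t + F t 0 * (-(h t))) t := (hG t).mul (hWd t)
    have hVfun : V = fun t => F t 0 * W t := funext hVeq
    rw [hVfun]
    convert hd using 1
    rw [← hVfun]
    have hv' : F t 0 * W t = V t := (hVeq t).symm
    have hPtT : F t 0 * h t = R t * P t T := by
      simp only [hh, ← mul_assoc]
      rw [hFinv t, one_mul]
    calc r t • V t - M t * V t - R t * P t T
        = -((M t - r t • 1) * V t) - R t * P t T := by
          rw [sub_mul, Matrix.smul_mul, one_mul]
          abel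
      _ = (-(A t * F t 0)) * W t + F t 0 * (-(h t)) := by
          rw [hA, neg_mul, mul_neg, mul_assoc, hv', hPtT]
          abel
  · rw [hV T, intervalIntegral.integral_same]
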